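/- Let R be a commutative ring and e : I ⟶ R, f : J ⟶ R idals of R-modules such that (e, f) : I ⊕ J ⟶ R is surjective. Then Spec R is covered by the open sets X_I and X_J, where X_I = {p ∈ Spec R : e_p : I_p ⟶ R_p is an isomorphism} and similarly X_J. Equivalently, for every prime p, at least one of e_p and f_p is surjective. -/
import Mathlib


/-- The localization of a linear map `e : J ⟶ R` at a submonoid `S`, as a map
`J_S ⟶ R_S` of localized modules. -/
noncomputable def locMap {R : Type u} [CommRing R] {J : Type u} [AddCommGroup J]
    [Module R J] (S : Submonoid R) (e : J →ₗ[R] R) :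
    LocalizedModule S J →ₗ[R] LocalizedModule S R :=
  IsLocalizedModule.map S (LocalizedModule.mkLinearMap S J)
    (LocalizedModule.mkLinearMap S R) e

lemma locMap_mk {R : Type u} [CommRing R] {J : Type u} [AddCommGroup J]
    [Module R J] (S : Submonoid R) (e : J →ₗ[R] R) (m : J) (s : S) :
    locMap S e (LocalizedModule.mk m s) = LocalizedModule.mk (e m) s := by
  rw [IsLocalizedModule.mk_eq_mk', IsLocalizedModule.mk_eq_mk', locMap,
    IsLocalizedModule.map_mk']

lemma locMap_bij {R : Type u} [CommRing R] {J : Type u} [AddCommGroup J]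
    [Module R J] (S : Submonoid R) (e : J →ₗ[R] R)
    (he : ∀ x y : J, e x • y = e y • x) (x : J) (hx : e x ∈ S) :
    Function.Bijective ⇑(locMap S e) := by
  constructor
  · rw [injective_iff_map_eq_zero]
    intro a ha
    induction a using LocalizedModule.induction_on with
    | h m s =>
      rw [locMap_mk, show (0 : LocalizedModule S R) = LocalizedModule.mk 0 1 from
        (LocalizedModule.zero_mk 1).symm, LocalizedModule.mk_eq] at ha
      obtain ⟨u, hu⟩ := ha
      simp only [one_smul, smul_zero] at hu
      rw [show (0 : LocalizedModule S J) = LocalizedModule.mk 0 1 from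
        (LocalizedModule.zero_mk 1).symm, LocalizedModule.mk_eq]
      refine ⟨⟨e x, hx⟩ * u, ?_⟩
      simp only [one_smul, smul_zero, mul_smul, Submonoid.smul_def]
      rw [smul_comm, he, ← mul_smul, mul_comm]
      rw [mul_comm (e m), show (u:R) * e m = u • e m from rfl, hu, zero_smul]
  · intro a
    induction a using LocalizedModule.induction_on with
    | h r s =>
      refine ⟨LocalizedModule.mk (r • x) (s * ⟨e x, hx⟩), ?_⟩
      rw [locMap_mk, map_smul, LocalizedModule.mk_eq]
      exact ⟨1, by simp [mul_smul, smul_comm, mul_comm, smul_smul]⟩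

/-- If `e : I ⟶ R` and `f : J ⟶ R` are idals with `(e,f) : I ⊕ J ⟶ R` surjective,
then `Spec R` is covered by the opens `X_I` and `X_J`: at every prime `p`, at least
one of the localizations `e_p`, `f_p` is an isomorphism (equivalently, surjective). -/
theorem idal_cover_spec_cover {R : Type u} [CommRing R] {I J : Type u} [AddCommGroup I]
    [AddCommGroup J] [Module R I] [Module R J] (e : I →ₗ[R] R) (f : J →ₗ[R] R)
    (he : ∀ x y : I, e x • y = e y • x) (hf : ∀ x y : J, f x • y = f y • x)
    (hsurj : Function.Surjective ⇑(LinearMap.coprod e f)) :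
    ∀ p : PrimeSpectrum R,
      Function.Bijective ⇑(locMap p.asIdeal.primeCompl e) ∨
      Function.Bijective ⇑(locMap p.asIdeal.primeCompl f) := by
  intro p
  obtain ⟨⟨x, y⟩, hxy⟩ := hsurj 1
  simp only [LinearMap.coprod_apply] at hxy
  by_cases hx : e x ∈ p.asIdeal
  · right
    refine locMap_bij _ f hf y ?_
    intro hy
    exact p.isPrime.ne_top (Ideal.eq_top_of_isUnit_mem _
      (hxy ▸ p.asIdeal.add_mem hx hy) isUnit_one)
  · exact Or.inl (locMap_bij _ e he x hx)
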